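/- Stabilization by pressure: given μ_BGK : [ρ₁,ρ₂] → ℝ continuous with μ_BGK < 0 on [ρ₁,ρ₂] ⊂ (0,1), and U_eq differentiable with U_eq′(ρ) ≤ −c < 0 on [ρ₁,ρ₂], there exists a strictly increasing differentiable pressure p (e.g. p(ρ) = Kρ² for K large enough) such that μ(ρ) = μ_BGK(ρ) − ρ² p′(ρ) U_eq′(ρ) > 0 for all ρ ∈ [ρ₁,ρ₂]. -/

import Mathlib

open Set

/-- stabilization by pressure.  If `μ_BGK` is continuous and
negative on `[ρ₁,ρ₂] ⊂ (0,1)` and `U_eq' ≤ −c < 0` there, then there is a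
strictly increasing differentiable pressure `p` (e.g. `p(ρ) = Kρ²` for `K`
large) with `μ(ρ) = μ_BGK(ρ) − ρ² p'(ρ) U_eq'(ρ) > 0` on `[ρ₁,ρ₂]`. -/
theorem stabilization_by_pressure
    (μBGK Ueq Ueq' : ℝ → ℝ) (ρ₁ ρ₂ c : ℝ)
    (h₁ : 0 < ρ₁) (h₁₂ : ρ₁ ≤ ρ₂) (h₂ : ρ₂ < 1)
    (hcont : ContinuousOn μBGK (Icc ρ₁ ρ₂))
    (hneg : ∀ r ∈ Icc ρ₁ ρ₂, μBGK r < 0)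
    (hc : 0 < c)
    (hUderiv : ∀ r ∈ Icc ρ₁ ρ₂, HasDerivAt Ueq (Ueq' r) r)
    (hU' : ∀ r ∈ Icc ρ₁ ρ₂, Ueq' r ≤ -c) :
    ∃ p p' : ℝ → ℝ,
      (∀ r, HasDerivAt p (p' r) r) ∧
      StrictMonoOn p (Icc (0:ℝ) 1) ∧
      ∀ r ∈ Icc ρ₁ ρ₂, 0 < μBGK r - r ^ 2 * p' r * Ueq' r := by
  obtain ⟨r₀, hr₀, hmax⟩ := isCompact_Icc.exists_isMaxOn (nonempty_Icc.2 h₁₂) hcont.neg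
  set M : ℝ := -μBGK r₀ with hM
  have hMpos : 0 < M := by simpa [hM] using hneg r₀ hr₀
  have hMub : ∀ r ∈ Icc ρ₁ ρ₂, -μBGK r ≤ M := fun r hr => hmax hr
  set K : ℝ := M / (ρ₁ ^ 3 * c) with hK
  have hρ3 : 0 < ρ₁ ^ 3 * c := by positivity
  have hKpos : 0 < K := div_pos hMpos hρ3
  refine ⟨fun r => K * r ^ 2, fun r => 2 * K * r, ?_, ?_, ?_⟩
  · intro r
    have := (hasDerivAt_pow 2 r).const_mul K
    convert this using 1
    · rfl
    · rfl
    · ring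
  · intro a ha b hb hab
    have ha0 : 0 ≤ a := ha.1
    have : a ^ 2 < b ^ 2 := by
      apply pow_lt_pow_left₀ hab ha0 (by norm_num)
    exact mul_lt_mul_of_pos_left this hKpos
  · intro r hr
    have hr1 : ρ₁ ≤ r := hr.1
    have hrpos : 0 < r := lt_of_lt_of_le h₁ hr1
    have hU := hU' r hr
    -- r^2 * (2*K*r) * Ueq' r ≤ -(2 * K * r^3 * c)
    have h1 : r ^ 2 * (2 * K * r) * Ueq' r ≤ 2 * K * r ^ 3 * (-c) := by
      have hpos : 0 < r ^ 2 * (2 * K * r) := by positivity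
      calc r ^ 2 * (2 * K * r) * Ueq' r ≤ r ^ 2 * (2 * K * r) * (-c) :=
            mul_le_mul_of_nonneg_left hU hpos.le
        _ = 2 * K * r ^ 3 * (-c) := by ring
    have h2 : 2 * K * ρ₁ ^ 3 * c ≤ 2 * K * r ^ 3 * c := by
      have h3 : ρ₁ ^ 3 ≤ r ^ 3 := pow_le_pow_left₀ h₁.le hr1 3
      nlinarith [mul_le_mul_of_nonneg_left h3 (by positivity : (0:ℝ) ≤ 2 * K * c)]
    have hKM : 2 * K * ρ₁ ^ 3 * c = 2 * M := by
      field_simp [hK]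
      rw [hK]; field_simp
    have hμ : -M ≤ μBGK r := by linarith [hMub r hr]
    show 0 < μBGK r - r ^ 2 * (2 * K * r) * Ueq' r
    linarith
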